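/- Let H : [0,1] → [0,∞) be constructed as follows: fix constants L > 1, and a sequence a_n > 0 with a_{n+1} ≤ a_n ≤ C₂ a_{n+1} and a_{n+m} ≤ C₁ a_n L^{-mβ₀} for all n, m ≥ 0 (with β₀ > 0); set H(L^{-n}) = a_n and interpolate linearly, H(0) = 0. Then there exist constants C₃, C₄ > 0 and β' ≥ β₀ (depending only on C₁, C₂, L, β₀) such that C₃ (t/s)^{β₀} ≤ H(t)/H(s) ≤ C₄ (t/s)^{β'} for all 0 < s ≤ t ≤ 1, and H satisfies the doubling property H(2r) ≤ C₅ H(r) for 0 ≤ r ≤ 1/2. -/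

import Mathlib

lemma stmt13_intvl (L : ℝ) (hL : 1 < L) (x : ℝ) (hx0 : 0 < x) (hx1 : x ≤ 1) :
    L ^ (-(((-⌈Real.logb L x⌉).toNat : ℕ) : ℝ) - 1) ≤ x ∧
      x ≤ L ^ (-(((-⌈Real.logb L x⌉).toNat : ℕ) : ℝ)) := by
  have hL0 : 0 < L := lt_trans one_pos hL
  set y := Real.logb L x with hy
  have hy0 : y ≤ 0 := Real.logb_nonpos hL hx0.le hx1
  have hk : (⌈y⌉ : ℤ) ≤ 0 := Int.ceil_le.mpr (by exact_mod_cast hy0)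
  have hcast : (((-⌈y⌉).toNat : ℕ) : ℝ) = -(⌈y⌉ : ℝ) := by
    have h := Int.toNat_of_nonneg (a := -⌈y⌉) (by omega)
    exact_mod_cast congrArg (fun z : ℤ => (z : ℝ)) h
  have hx : L ^ y = x := Real.rpow_logb hL0 (ne_of_gt hL) hx0
  constructor
  · rw [hcast]
    have : -(-(⌈y⌉:ℝ)) - 1 ≤ y := by
      have := Int.ceil_lt_add_one y
      push_cast at this ⊢; linarith
    calc L ^ (-(-(⌈y⌉:ℝ)) - 1) ≤ L ^ y :=
          Real.rpow_le_rpow_of_exponent_le hL.le this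
      _ = x := hx
  · rw [hcast]
    have : y ≤ -(-(⌈y⌉:ℝ)) := by
      have := Int.le_ceil y; push_cast at this ⊢; linarith
    calc x = L ^ y := hx.symm
      _ ≤ L ^ (-(-(⌈y⌉:ℝ))) := Real.rpow_le_rpow_of_exponent_le hL.le this

lemma stmt13_Hbound (L : ℝ) (hL : 1 < L) (a : ℕ → ℝ)
    (hdec : ∀ n, a (n + 1) ≤ a n) (H : ℝ → ℝ)
    (hHlin : ∀ n : ℕ, ∀ t ∈ Set.Icc (L ^ (-(n : ℝ) - 1)) (L ^ (-(n : ℝ))),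
      H t = a (n + 1) + (a n - a (n + 1)) *
        ((t - L ^ (-(n : ℝ) - 1)) / (L ^ (-(n : ℝ)) - L ^ (-(n : ℝ) - 1))))
    (n : ℕ) (x : ℝ) (hlo : L ^ (-(n : ℝ) - 1) ≤ x) (hhi : x ≤ L ^ (-(n : ℝ))) :
    a (n + 1) ≤ H x ∧ H x ≤ a n := by
  have hgap : L ^ (-(n : ℝ) - 1) < L ^ (-(n : ℝ)) :=
    Real.rpow_lt_rpow_of_exponent_lt hL (by linarith)
  have hθ0 : 0 ≤ (x - L ^ (-(n : ℝ) - 1)) / (L ^ (-(n : ℝ)) - L ^ (-(n : ℝ) - 1)) :=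
    div_nonneg (by linarith) (by linarith)
  have hθ1 : (x - L ^ (-(n : ℝ) - 1)) / (L ^ (-(n : ℝ)) - L ^ (-(n : ℝ) - 1)) ≤ 1 :=
    (div_le_one (by linarith)).mpr (by linarith)
  have hH := hHlin n x ⟨hlo, hhi⟩
  have hd := hdec n
  constructor
  · rw [hH]; nlinarith
  · rw [hH]; nlinarith

theorem stmt13 (L β₀ C₁ C₂ : ℝ) (hL : 1 < L) (hβ₀ : 0 < β₀)
    (hC₁ : 1 ≤ C₁) (hC₂ : 1 ≤ C₂)
    (a : ℕ → ℝ) (ha : ∀ n, 0 < a n)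
    (hdec : ∀ n, a (n + 1) ≤ a n) (hcmp : ∀ n, a n ≤ C₂ * a (n + 1))
    (hsub : ∀ n m : ℕ, a (n + m) ≤ C₁ * a n * L ^ (-(m : ℝ) * β₀))
    (H : ℝ → ℝ) (hH0 : H 0 = 0)
    (hHn : ∀ n : ℕ, H (L ^ (-(n : ℝ))) = a n)
    (hHlin : ∀ n : ℕ, ∀ t ∈ Set.Icc (L ^ (-(n : ℝ) - 1)) (L ^ (-(n : ℝ))),
      H t = a (n + 1) + (a n - a (n + 1)) *
        ((t - L ^ (-(n : ℝ) - 1)) / (L ^ (-(n : ℝ)) - L ^ (-(n : ℝ) - 1)))) :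
    ∃ C₃ C₄ β' C₅ : ℝ, 0 < C₃ ∧ 0 < C₄ ∧ β₀ ≤ β' ∧ 0 < C₅ ∧
      (∀ s t : ℝ, 0 < s → s ≤ t → t ≤ 1 →
        C₃ * (t / s) ^ β₀ ≤ H t / H s ∧ H t / H s ≤ C₄ * (t / s) ^ β') ∧
      (∀ r : ℝ, 0 ≤ r → r ≤ 1 / 2 → H (2 * r) ≤ C₅ * H r) := by
  have hL0 : 0 < L := lt_trans one_pos hL
  have hC₂0 : 0 < C₂ := lt_of_lt_of_le one_pos hC₂
  have hC₁0 : 0 < C₁ := lt_of_lt_of_le one_pos hC₁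
  set β' : ℝ := max β₀ (Real.logb L C₂) with hβ'def
  have hβ' : β₀ ≤ β' := le_max_left _ _
  have hβ'0 : 0 < β' := lt_of_lt_of_le hβ₀ hβ'
  have hLβ' : C₂ ≤ L ^ β' := by
    calc C₂ = L ^ Real.logb L C₂ := (Real.rpow_logb hL0 (ne_of_gt hL) hC₂0).symm
      _ ≤ L ^ β' := Real.rpow_le_rpow_of_exponent_le hL.le (le_max_right _ _)
  have chain : ∀ n k : ℕ, a n ≤ C₂ ^ k * a (n + k) := by
    intro n k
    induction k with
    | zero => simp
    | succ k ih =>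
      calc a n ≤ C₂ ^ k * a (n + k) := ih
        _ ≤ C₂ ^ k * (C₂ * a (n + k + 1)) :=
            mul_le_mul_of_nonneg_left (hcmp (n + k)) (pow_nonneg hC₂0.le k)
        _ = C₂ ^ (k + 1) * a (n + (k + 1)) := by
            rw [show n + (k + 1) = n + k + 1 from rfl, pow_succ]; ring
  set C₃ : ℝ := (C₁ * C₂ * L ^ β₀)⁻¹ with hC₃def
  set C₄ : ℝ := C₂ ^ 2 with hC₄def
  have hLβ₀ : (0:ℝ) < L ^ β₀ := Real.rpow_pos_of_pos hL0 _
  have hC₃0 : 0 < C₃ := by rw [hC₃def]; positivity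
  have hC₄0 : 0 < C₄ := by rw [hC₄def]; positivity
  have main : ∀ s t : ℝ, 0 < s → s ≤ t → t ≤ 1 →
      C₃ * (t / s) ^ β₀ ≤ H t / H s ∧ H t / H s ≤ C₄ * (t / s) ^ β' := by
    intro s t hs0 hst ht1
    have ht0 : 0 < t := lt_of_lt_of_le hs0 hst
    have hs1 : s ≤ 1 := le_trans hst ht1
    set n : ℕ := (-⌈Real.logb L t⌉).toNat with hn
    set m : ℕ := (-⌈Real.logb L s⌉).toNat with hm
    have hnm : n ≤ m := by
      have hlog : Real.logb L s ≤ Real.logb L t :=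
        Real.logb_le_logb_of_le hL hs0 hst
      have : ⌈Real.logb L s⌉ ≤ ⌈Real.logb L t⌉ := Int.ceil_le_ceil hlog
      exact Int.toNat_le_toNat (by omega)
    obtain ⟨hlt, htu⟩ := stmt13_intvl L hL t ht0 ht1
    obtain ⟨hls, hsu⟩ := stmt13_intvl L hL s hs0 hs1
    rw [← hn] at hlt htu
    rw [← hm] at hls hsu
    obtain ⟨hHt1, hHt2⟩ := stmt13_Hbound L hL a hdec H hHlin n t hlt htu
    obtain ⟨hHs1, hHs2⟩ := stmt13_Hbound L hL a hdec H hHlin m s hls hsu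
    have hHt0 : 0 < H t := lt_of_lt_of_le (ha (n + 1)) hHt1
    have hHs0 : 0 < H s := lt_of_lt_of_le (ha (m + 1)) hHs1
    have hlm0 : (0:ℝ) < L ^ (-(m : ℝ) - 1) := Real.rpow_pos_of_pos hL0 _
    have hln0 : (0:ℝ) < L ^ (-(n : ℝ)) := Real.rpow_pos_of_pos hL0 _
    have hcastmn : (((m - n : ℕ)) : ℝ) = (m : ℝ) - n := by
      push_cast [hnm]; ring
    constructor
    · -- lower bound
      have stepA : t / s ≤ L ^ ((m : ℝ) - n + 1) := by
        have h1 : t / s ≤ L ^ (-(n : ℝ)) / L ^ (-(m : ℝ) - 1) :=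
          div_le_div₀ hln0.le htu hlm0 hls
        rw [← Real.rpow_sub hL0] at h1
        calc t / s ≤ L ^ (-(n:ℝ) - (-(m:ℝ) - 1)) := h1
          _ = L ^ ((m:ℝ) - n + 1) := by ring_nf
      have stepB : (t / s) ^ β₀ ≤ L ^ (((m : ℝ) - n + 1) * β₀) := by
        rw [Real.rpow_mul hL0.le]
        exact Real.rpow_le_rpow (by positivity) stepA hβ₀.le
      have hQ0 : (0:ℝ) < L ^ (-((m:ℝ) - n) * β₀) := Real.rpow_pos_of_pos hL0 _
      have hcm : a m ≤ C₁ * C₂ * a (n + 1) * L ^ (-((m:ℝ) - n) * β₀) := by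
        have h := hsub n (m - n)
        rw [Nat.add_sub_cancel' hnm, hcastmn] at h
        have h2 := mul_le_mul_of_nonneg_right
          (mul_le_mul_of_nonneg_left (hcmp n) hC₁0.le) hQ0.le
        calc a m ≤ C₁ * a n * L ^ (-((m:ℝ) - n) * β₀) := h
          _ ≤ C₁ * (C₂ * a (n + 1)) * L ^ (-((m:ℝ) - n) * β₀) := h2
          _ = C₁ * C₂ * a (n + 1) * L ^ (-((m:ℝ) - n) * β₀) := by ring
      have hmid : C₃ * L ^ (((m : ℝ) - n + 1) * β₀) ≤ a (n + 1) / a m := by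
        rw [le_div_iff₀ (ha m)]
        have hP : (0:ℝ) < L ^ (((m:ℝ) - n) * β₀) := Real.rpow_pos_of_pos hL0 _
        have hPQ : L ^ (((m:ℝ) - n) * β₀) * L ^ (-((m:ℝ) - n) * β₀) = 1 := by
          rw [← Real.rpow_add hL0]; ring_nf; exact Real.rpow_zero L
        have hsplit : L ^ (((m : ℝ) - n + 1) * β₀)
            = L ^ (((m:ℝ) - n) * β₀) * L ^ β₀ := by
          rw [← Real.rpow_add hL0]; ring_nf
        have key : L ^ (((m:ℝ) - n) * β₀) * a m ≤ C₁ * C₂ * a (n + 1) := by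
          calc L ^ (((m:ℝ) - n) * β₀) * a m
              ≤ L ^ (((m:ℝ) - n) * β₀) *
                (C₁ * C₂ * a (n + 1) * L ^ (-((m:ℝ) - n) * β₀)) :=
                mul_le_mul_of_nonneg_left hcm hP.le
            _ = (C₁ * C₂ * a (n + 1)) *
                (L ^ (((m:ℝ) - n) * β₀) * L ^ (-((m:ℝ) - n) * β₀)) := by ring
            _ = C₁ * C₂ * a (n + 1) := by rw [hPQ, mul_one]
        have hrw : C₃ * L ^ (((m : ℝ) - n + 1) * β₀) * a m
            = (L ^ (((m:ℝ) - n) * β₀) * a m) / (C₁ * C₂) := by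
          rw [hsplit, hC₃def]
          field_simp
        rw [hrw, div_le_iff₀ (by positivity)]
        calc L ^ (((m:ℝ) - n) * β₀) * a m ≤ C₁ * C₂ * a (n + 1) := key
          _ = a (n + 1) * (C₁ * C₂) := by ring
      calc C₃ * (t / s) ^ β₀ ≤ C₃ * L ^ (((m : ℝ) - n + 1) * β₀) :=
            mul_le_mul_of_nonneg_left stepB hC₃0.le
        _ ≤ a (n + 1) / a m := hmid
        _ ≤ H t / H s := div_le_div₀ hHt0.le hHt1 hHs0 hHs2
    · -- upper bound
      have stepA' : L ^ ((m : ℝ) - n - 1) ≤ t / s := by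
        have h1 : L ^ (-(n : ℝ) - 1) / L ^ (-(m : ℝ)) ≤ t / s :=
          div_le_div₀ ht0.le hlt hs0 hsu
        rw [← Real.rpow_sub hL0] at h1
        calc L ^ ((m:ℝ) - n - 1) = L ^ (-(n:ℝ) - 1 - -(m:ℝ)) := by ring_nf
          _ ≤ t / s := h1
      have hts1 : (1:ℝ) ≤ t / s := (one_le_div hs0).mpr hst
      have hts : (1:ℝ) ≤ (t / s) ^ β' := Real.one_le_rpow hts1 hβ'0.le
      have stepB' : H t / H s ≤ a n / a (m + 1) :=
        div_le_div₀ (ha n).le hHt2 (ha (m + 1)) hHs1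
      have stepC' : a n / a (m + 1) ≤ C₂ ^ (m + 1 - n) := by
        rw [div_le_iff₀ (ha (m + 1))]
        have h := chain n (m + 1 - n)
        rwa [Nat.add_sub_cancel' (by omega)] at h
      have stepD' : (C₂:ℝ) ^ (m + 1 - n) ≤ C₄ * (t / s) ^ β' := by
        set k : ℕ := m - n with hk
        have hmn1 : m + 1 - n = k + 1 := by omega
        rw [hmn1]
        rcases Nat.eq_zero_or_pos k with hk0 | hk1
        · rw [hk0, pow_one, hC₄def]
          have h1 : C₂ ≤ C₂ ^ 2 := by nlinarith
          have h2 : C₂ ^ 2 ≤ C₂ ^ 2 * (t / s) ^ β' :=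
            le_mul_of_one_le_right (by positivity) hts
          linarith
        · have hkm : ((k - 1 : ℕ) : ℝ) = (m:ℝ) - n - 1 := by
            rw [Nat.cast_sub hk1, hk, Nat.cast_sub hnm]
            push_cast; ring
          have h1 : (C₂:ℝ) ^ (k - 1) ≤ (L ^ β') ^ (k - 1) :=
            pow_le_pow_left₀ hC₂0.le hLβ' _
          have h2 : ((L ^ β') : ℝ) ^ (k - 1) = L ^ (((m:ℝ) - n - 1) * β') := by
            rw [← Real.rpow_natCast (L ^ β') (k - 1), ← Real.rpow_mul hL0.le, hkm]
            ring_nf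
          have h3 : L ^ (((m:ℝ) - n - 1) * β') ≤ (t / s) ^ β' := by
            rw [Real.rpow_mul hL0.le]
            exact Real.rpow_le_rpow (Real.rpow_pos_of_pos hL0 _).le stepA' hβ'0.le
          have h5 : (C₂:ℝ) ^ (k - 1) ≤ (t / s) ^ β' := h1.trans (h2.le.trans h3)
          have h4 : (C₂:ℝ) ^ (k + 1) = C₂ ^ 2 * C₂ ^ (k - 1) := by
            rw [← pow_add]
            congr 1
            omega
          rw [h4, hC₄def]
          exact mul_le_mul_of_nonneg_left h5 (by positivity)
      calc H t / H s ≤ a n / a (m + 1) := stepB'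
        _ ≤ C₂ ^ (m + 1 - n) := stepC'
        _ ≤ C₄ * (t / s) ^ β' := stepD'
  refine ⟨C₃, C₄, β', C₄ * 2 ^ β', hC₃0, hC₄0, hβ', by positivity, main, ?_⟩
  intro r hr0 hr2
  rcases eq_or_lt_of_le hr0 with hr | hr
  · rw [← hr]; simp [hH0]
  · have h2r : 2 * r ≤ 1 := by linarith
    have hr2r : r ≤ 2 * r := by linarith
    obtain ⟨_, hub⟩ := main r (2 * r) hr hr2r h2r
    have hHr0 : 0 < H r := by
      obtain ⟨hl, hu⟩ := stmt13_intvl L hL r hr (by linarith)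
      obtain ⟨h1, _⟩ := stmt13_Hbound L hL a hdec H hHlin _ r hl hu
      exact lt_of_lt_of_le (ha _) h1
    have hdiv : (2 * r) / r = 2 := by
      field_simp
    rw [hdiv] at hub
    calc H (2 * r) = (H (2 * r) / H r) * H r := by field_simp
      _ ≤ (C₄ * 2 ^ β') * H r := by
          exact mul_le_mul_of_nonneg_right hub hHr0.le
      _ = C₄ * 2 ^ β' * H r := by ring
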